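/- For every θ ∈ (0, π/2) and every ξ ∈ ℝ, the (absolutely convergent) integral identity ∫_ℝ cosh(x − iθ)/cosh²(x + iθ) · e^{−i ξ x} dx = π e^{−θ ξ} / cosh(π ξ / 2) · ( cos(2θ) − ξ sin(2θ) ) holds, where cosh(x ± iθ) = cos θ · cosh x ± i sin θ · sinh x denotes the complex hyperbolic cosine. -/

import Mathlib

open MeasureTheory

namespace SolitonFT

open Real Filter intervalIntegral Set Complex
open scoped Topology

noncomputable section





lemma cosh_add_mul_I (x y : ℝ) :
    Complex.cosh (x + y * Complex.I)
      = (Real.cosh x * Real.cos y : ℝ) + (Real.sinh x * Real.sin y : ℝ) * Complex.I := by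
  rw [Complex.cosh_add, Complex.cosh_mul_I, Complex.sinh_mul_I]
  push_cast
  ring

lemma sinh_add_mul_I (x y : ℝ) :
    Complex.sinh (x + y * Complex.I)
      = (Real.sinh x * Real.cos y : ℝ) + (Real.cosh x * Real.sin y : ℝ) * Complex.I := by
  rw [Complex.sinh_add, Complex.cosh_mul_I, Complex.sinh_mul_I]
  push_cast
  ring

lemma abs_cosh_le (x y : ℝ) : ‖Complex.cosh (x + y * Complex.I)‖ ≤ Real.cosh x := by
  rw [← Real.sqrt_sq (Real.cosh_pos x).le, Complex.norm_def]
  apply Real.sqrt_le_sqrt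
  rw [cosh_add_mul_I, Complex.normSq_add_mul_I]
  nlinarith [Real.sin_sq_add_cos_sq y, Real.cosh_sq x, Real.cosh_pos x, sq_nonneg (Real.sin y),
    sq_nonneg (Real.cos y)]

lemma abs_sinh_le (x y : ℝ) : ‖Complex.sinh (x + y * Complex.I)‖ ≤ Real.cosh x := by
  rw [← Real.sqrt_sq (Real.cosh_pos x).le, Complex.norm_def]
  apply Real.sqrt_le_sqrt
  rw [sinh_add_mul_I, Complex.normSq_add_mul_I]
  nlinarith [Real.sin_sq_add_cos_sq y, Real.cosh_sq x, Real.cosh_pos x, sq_nonneg (Real.sin y),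
    sq_nonneg (Real.cos y)]

lemma le_abs_cosh {y : ℝ} (hy : 0 ≤ Real.cos y) (x : ℝ) :
    Real.cos y * Real.cosh x ≤ ‖Complex.cosh (x + y * Complex.I)‖ := by
  rw [← Real.sqrt_sq (by positivity : (0:ℝ) ≤ Real.cos y * Real.cosh x), Complex.norm_def]
  apply Real.sqrt_le_sqrt
  rw [cosh_add_mul_I, Complex.normSq_add_mul_I]
  nlinarith [sq_nonneg (Real.sinh x * Real.sin y)]

lemma cosh_ne_zero {y : ℝ} (hy : 0 < Real.cos y) (x : ℝ) :
    Complex.cosh (x + y * Complex.I) ≠ 0 := by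
  intro h
  have := le_abs_cosh hy.le x
  rw [h, norm_zero] at this
  nlinarith [Real.cosh_pos x]


lemma integrable_sech : Integrable (fun x : ℝ => (Real.cosh x)⁻¹) := by
  have hcont : Continuous fun x : ℝ => (Real.cosh x)⁻¹ :=
    Real.continuous_cosh.inv₀ (fun x => (Real.cosh_pos x).ne')
  have hbound : ∀ x : ℝ, (Real.cosh x)⁻¹ ≤ 2 * Real.exp (-|x|) := by
    intro x
    rw [inv_le_iff_one_le_mul₀ (Real.cosh_pos x)]
    have h1 : Real.exp |x| ≤ 2 * Real.cosh x := by
      rcases abs_cases x with ⟨h, _⟩ | ⟨h, _⟩ <;> rw [h, Real.cosh_eq] <;>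
        nlinarith [Real.exp_pos x, Real.exp_pos (-x)]
    have h2 : Real.exp (-|x|) * Real.exp |x| = 1 := by
      rw [← Real.exp_add]; simp
    nlinarith [Real.exp_pos (-|x|)]
  have hexp : Integrable (fun x : ℝ => 2 * Real.exp (-|x|)) := by
    have h1 : IntegrableOn (fun x : ℝ => Real.exp (-|x|)) (Ioi 0) := by
      apply (exp_neg_integrableOn_Ioi 0 one_pos).congr_fun _ measurableSet_Ioi
      intro x hx; simp [abs_of_pos (mem_Ioi.mp hx)]
    have h2 : IntegrableOn (fun x : ℝ => Real.exp (-|x|)) (Iic 0) := by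
      apply (integrableOn_exp_Iic 0).congr_fun _ measurableSet_Iic
      intro x hx
      simp [abs_of_nonpos (mem_Iic.mp hx)]
    have : Integrable (fun x : ℝ => Real.exp (-|x|)) := by
      rw [← integrableOn_univ, ← Iic_union_Ioi (a := (0:ℝ))]
      exact h2.union h1
    exact this.const_mul 2
  exact hexp.mono' hcont.aestronglyMeasurable
    (Eventually.of_forall fun x => by
      rw [Real.norm_eq_abs, abs_of_pos (by positivity)]; exact hbound x)


-- placeholders from previous files
lemma integrable_of_sech_bound {f : ℝ → ℂ} (hf : Continuous f) (M : ℝ)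
    (hM : ∀ x, ‖f x‖ ≤ M * (Real.cosh x)⁻¹) : Integrable f := by
  refine (integrable_sech.const_mul M).mono' hf.aestronglyMeasurable
    (Eventually.of_forall fun x => ?_)
  exact hM x

lemma abs_exp_I_mul (ξ x : ℝ) : ‖Complex.exp (-(Complex.I * ξ * x))‖ = 1 := by
  rw [Complex.norm_exp]
  simp

lemma continuous_expc (ξ : ℝ) : Continuous fun x : ℝ => Complex.exp (-(Complex.I * ξ * x)) := by
  fun_prop

lemma continuous_coshc (y : ℝ) : Continuous fun x : ℝ => Complex.cosh (x + y * Complex.I) := by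
  fun_prop

lemma continuous_sinhc (y : ℝ) : Continuous fun x : ℝ => Complex.sinh (x + y * Complex.I) := by
  fun_prop

lemma integrable_inv_cosh {y : ℝ} (hy : 0 < Real.cos y) (ξ : ℝ) :
    Integrable (fun x : ℝ => Complex.exp (-(Complex.I * ξ * x)) / Complex.cosh (x + y * Complex.I)) := by
  apply integrable_of_sech_bound
  · exact (continuous_expc ξ).div (continuous_coshc y) (fun x => cosh_ne_zero hy x)
  · intro x
    rw [norm_div, abs_exp_I_mul]
    rw [div_eq_mul_inv, one_mul]
    have h1 := le_abs_cosh hy.le x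
    have h2 : (0:ℝ) < Real.cos y * Real.cosh x := by positivity
    calc (‖Complex.cosh (x + y * Complex.I)‖)⁻¹
        ≤ (Real.cos y * Real.cosh x)⁻¹ := by
          apply inv_anti₀ h2 h1
      _ = (Real.cos y)⁻¹ * (Real.cosh x)⁻¹ := by rw [mul_inv]

lemma integrable_sinh_div_sq {y : ℝ} (hy : 0 < Real.cos y) (ξ : ℝ) :
    Integrable (fun x : ℝ => Complex.sinh (x + y * Complex.I) / Complex.cosh (x + y * Complex.I) ^ 2
      * Complex.exp (-(Complex.I * ξ * x))) := by
  refine integrable_of_sech_bound ?_ (((Real.cos y)^2)⁻¹) ?_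
  · exact ((continuous_sinhc y).div ((continuous_coshc y).pow 2)
      (fun x => pow_ne_zero 2 (cosh_ne_zero hy x))).mul (continuous_expc ξ)
  · intro x
    rw [norm_mul, abs_exp_I_mul, mul_one, norm_div, norm_pow]
    have h1 := le_abs_cosh hy.le x
    have h2 : (0:ℝ) < Real.cos y * Real.cosh x := by positivity
    have h3 := abs_sinh_le x y
    have h4 : (Real.cos y * Real.cosh x)^2 ≤ (‖Complex.cosh (x + y * Complex.I)‖)^2 := by
      apply pow_le_pow_left₀ h2.le h1
    have h5 : ‖Complex.sinh (x + y * Complex.I)‖ / (‖Complex.cosh (x + y * Complex.I)‖)^2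
        ≤ Real.cosh x / (Real.cos y * Real.cosh x)^2 := by
      apply div_le_div₀ (by positivity) h3 (by positivity) h4
    refine h5.trans (le_of_eq ?_)
    field_simp

lemma integrable_main {y : ℝ} (hy : 0 < Real.cos y) (ξ : ℝ) :
    Integrable (fun x : ℝ => Complex.cosh (x + -(y:ℂ) * Complex.I) / Complex.cosh (x + y * Complex.I) ^ 2
      * Complex.exp (-(Complex.I * ξ * x))) := by
  refine integrable_of_sech_bound ?_ (((Real.cos y)^2)⁻¹) ?_
  · refine Continuous.mul ?_ (continuous_expc ξ)
    have : Continuous fun x : ℝ => Complex.cosh (x + ((-y : ℝ) : ℂ) * Complex.I) := continuous_coshc (-y)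
    push_cast at this
    exact this.div ((continuous_coshc y).pow 2)
      (fun x => pow_ne_zero 2 (cosh_ne_zero hy x))
  · intro x
    rw [norm_mul, abs_exp_I_mul, mul_one, norm_div, norm_pow]
    have h1 := le_abs_cosh hy.le x
    have h2 : (0:ℝ) < Real.cos y * Real.cosh x := by positivity
    have h3 : ‖Complex.cosh (x + -(y:ℂ) * Complex.I)‖ ≤ Real.cosh x := by
      have := abs_cosh_le x (-y); push_cast at this; exact this
    have h4 : (Real.cos y * Real.cosh x)^2 ≤ (‖Complex.cosh (x + y * Complex.I)‖)^2 :=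
      pow_le_pow_left₀ h2.le h1 2
    have h5 : ‖Complex.cosh (x + -(y:ℂ) * Complex.I)‖ / (‖Complex.cosh (x + y * Complex.I)‖)^2
        ≤ Real.cosh x / (Real.cos y * Real.cosh x)^2 :=
      div_le_div₀ (by positivity) h3 (by positivity) h4
    refine h5.trans (le_of_eq ?_)
    field_simp


lemma cpow_real_pos {r : ℝ} (hr : 0 < r) (z : ℂ) :
    (r : ℂ) ^ z = Complex.exp (Real.log r * z) := by
  rw [Complex.cpow_def_of_ne_zero (Complex.ofReal_ne_zero.2 hr.ne'), Complex.ofReal_log hr.le]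

def φ (w : ℝ) : ℝ := (1 + Real.exp (-(2 * w)))⁻¹

lemma φ_pos_den (w : ℝ) : 0 < 1 + Real.exp (-(2 * w)) := by positivity

lemma φ_eq (w : ℝ) : φ w = Real.exp w / (2 * Real.cosh w) := by
  rw [φ, Real.cosh_eq]
  rw [show -(2*w) = -w + -w by ring, Real.exp_add]
  have h1 := Real.exp_pos w
  have h2 := Real.exp_pos (-w)
  have h3 : Real.exp w * Real.exp (-w) = 1 := by rw [← Real.exp_add]; simp
  field_simp
  nlinarith

lemma one_sub_φ (w : ℝ) : 1 - φ w = Real.exp (-w) / (2 * Real.cosh w) := by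
  rw [φ_eq, Real.cosh_eq]
  have h1 := Real.exp_pos w
  have h2 := Real.exp_pos (-w)
  field_simp
  ring

lemma φ_mem (w : ℝ) : φ w ∈ Ioo (0:ℝ) 1 := by
  constructor
  · rw [φ]; positivity
  · rw [φ, inv_lt_one_iff₀]
    right
    nlinarith [Real.exp_pos (-(2*w))]

lemma φ_hasDeriv (w : ℝ) : HasDerivAt φ ((2 * Real.cosh w ^ 2)⁻¹) w := by
  have h : HasDerivAt (fun w : ℝ => 1 + Real.exp (-(2 * w)))
      (Real.exp (-(2 * w)) * (-2)) w := by
    have := (Real.hasDerivAt_exp (-(2*w))).comp w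
      (((hasDerivAt_id w).const_mul (2:ℝ)).neg)
    simpa using this.const_add 1
  have := h.fun_inv (φ_pos_den w).ne'
  refine this.congr_deriv (Eq.symm ?_)
  have h1 := Real.exp_pos w
  have h2 := Real.exp_pos (-w)
  have h3 : Real.exp w * Real.exp (-w) = 1 := by rw [← Real.exp_add]; simp
  rw [Real.cosh_eq, show -(2*w) = -w + -w by ring, Real.exp_add]
  field_simp
  nlinarith [sq_nonneg (Real.exp w + Real.exp (-w))]

lemma φ_strictMono : StrictMono φ := by
  intro a b hab
  rw [φ, φ]
  apply inv_strictAnti₀ (φ_pos_den b)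
  have : Real.exp (-(2*b)) < Real.exp (-(2*a)) := Real.exp_lt_exp.2 (by linarith)
  linarith

lemma φ_image : φ '' univ = Ioo (0:ℝ) 1 := by
  apply Subset.antisymm
  · rintro x ⟨w, -, rfl⟩
    exact φ_mem w
  · rintro x ⟨hx0, hx1⟩
    refine ⟨-(Real.log (x⁻¹ - 1)) / 2, trivial, ?_⟩
    rw [φ]
    have hx : 0 < x⁻¹ - 1 := by
      rw [sub_pos]
      exact (one_lt_inv₀ hx0).mpr hx1
    rw [show -(2 * (-(Real.log (x⁻¹ - 1)) / 2)) = Real.log (x⁻¹ - 1) by ring,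
      Real.exp_log hx]
    field_simp
    ring


lemma key0 (ξ : ℝ) :
    ∫ x : ℝ, Complex.exp (-(Complex.I * ξ * x)) / (Real.cosh x : ℂ)
      = (Real.pi : ℂ) / (Real.cosh (Real.pi * ξ / 2) : ℂ) := by
  set s : ℂ := (1 - Complex.I * ξ) / 2 with hs
  have hs_re : 0 < s.re := by norm_num [hs]
  have h1s_re : 0 < (1 - s).re := by norm_num [hs]
  -- Step 1: Gamma product equals beta integral
  have hbeta : Complex.betaIntegral s (1 - s) = (Real.pi : ℂ) / Complex.sin (Real.pi * s) := by
    have h1 := Complex.Gamma_mul_Gamma_eq_betaIntegral hs_re h1s_re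
    rw [show s + (1 - s) = 1 by ring, Complex.Gamma_one, one_mul] at h1
    rw [← h1, Complex.Gamma_mul_Gamma_one_sub]
  -- Step 2: sin (π s) = cosh (π ξ / 2)
  have hsin : Complex.sin (Real.pi * s) = (Real.cosh (Real.pi * ξ / 2) : ℂ) := by
    have : (Real.pi : ℂ) * s = Real.pi / 2 - (Real.pi * ξ / 2 : ℝ) * Complex.I := by
      rw [hs]; push_cast; ring
    rw [this, Complex.sin_pi_div_two_sub, Complex.cos_mul_I, Complex.ofReal_cosh]
  -- Step 3: beta integral as set integral over Ioo 0 1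
  have hbeta2 : Complex.betaIntegral s (1 - s)
      = ∫ x in Ioo (0:ℝ) 1, (x : ℂ) ^ (s - 1) * ((1 - x : ℝ) : ℂ) ^ (-s) := by
    rw [Complex.betaIntegral, intervalIntegral.integral_of_le zero_le_one,
      MeasureTheory.integral_Ioc_eq_integral_Ioo]
    refine setIntegral_congr_fun measurableSet_Ioo fun x hx => ?_
    rw [show (1:ℂ) - s - 1 = -s by ring]
    push_cast
    ring
  -- Step 4: change of variables
  have hcov : (∫ x in Ioo (0:ℝ) 1, (x : ℂ) ^ (s - 1) * ((1 - x : ℝ) : ℂ) ^ (-s))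
      = ∫ w : ℝ, Complex.exp (-(Complex.I * ξ * w)) / (Real.cosh w : ℂ) := by
    rw [← φ_image, integral_image_eq_integral_abs_deriv_smul MeasurableSet.univ
      (fun w _ => (φ_hasDeriv w).hasDerivWithinAt) (φ_strictMono.injective.injOn)]
    rw [MeasureTheory.setIntegral_univ]
    refine integral_congr_ae (Eventually.of_forall fun w => ?_)
    beta_reduce
    have hc := Real.cosh_pos w
    have h2c : (0:ℝ) < 2 * Real.cosh w := by linarith
    set L := Real.log (2 * Real.cosh w) with hL
    have hφpos : 0 < φ w := (φ_mem w).1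
    have h1φpos : 0 < 1 - φ w := by linarith [(φ_mem w).2]
    rw [cpow_real_pos hφpos, cpow_real_pos h1φpos]
    have hlog1 : Real.log (φ w) = w - L := by
      rw [φ_eq, Real.log_div (Real.exp_pos w).ne' h2c.ne', Real.log_exp]
    have hlog2 : Real.log (1 - φ w) = -w - L := by
      rw [one_sub_φ, Real.log_div (Real.exp_pos (-w)).ne' h2c.ne', Real.log_exp]
    rw [hlog1, hlog2]
    rw [← Complex.exp_add]
    have hexp_eq : ((w - L : ℝ) : ℂ) * (s - 1) + ((-w - L : ℝ) : ℂ) * (-s)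
        = -(Complex.I * ξ * w) + (L : ℝ) := by
      rw [hs]; push_cast; ring
    rw [hexp_eq, Complex.exp_add,
      show Complex.exp ((L:ℝ):ℂ) = ((2 * Real.cosh w : ℝ) : ℂ) by
        rw [← Complex.ofReal_exp, hL, Real.exp_log h2c]]
    have hderiv_abs : |(2 * Real.cosh w ^ 2)⁻¹| = (2 * Real.cosh w ^ 2)⁻¹ :=
      abs_of_pos (by positivity)
    rw [hderiv_abs, real_smul]
    push_cast
    have hcc : Complex.cosh (w : ℂ) ≠ 0 := by
      rw [← Complex.ofReal_cosh]
      exact_mod_cast hc.ne'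
    field_simp
  rw [← hcov, ← hbeta2, hbeta, hsin]


lemma key {θ : ℝ} (hθ0 : 0 ≤ θ) (hθ : θ < Real.pi / 2) (ξ : ℝ) :
    ∫ x : ℝ, Complex.exp (-(Complex.I * ξ * x)) / Complex.cosh (x + θ * Complex.I)
      = ((Real.pi * Real.exp (-(θ * ξ)) / Real.cosh (Real.pi * ξ / 2) : ℝ) : ℂ) := by
  have hπ := Real.pi_pos
  have hcosθ : 0 < Real.cos θ :=
    Real.cos_pos_of_mem_Ioo ⟨by linarith, hθ⟩
  set h : ℂ → ℂ := fun z => Complex.exp (-(Complex.I * ξ * z)) / Complex.cosh z with hh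
  -- differentiability
  have hdiff : ∀ z : ℂ, z.im ∈ Icc (0:ℝ) θ → DifferentiableAt ℂ h z := by
    intro z hz
    apply DifferentiableAt.div
    · apply Complex.differentiable_exp.differentiableAt.comp
      fun_prop
    · exact Complex.differentiable_cosh.differentiableAt
    · have hzim : 0 < Real.cos z.im := by
        apply Real.cos_pos_of_mem_Ioo
        constructor
        · linarith [hz.1]
        · exact lt_of_le_of_lt hz.2 hθ
      have := cosh_ne_zero hzim z.re
      rwa [Complex.re_add_im z] at this
  -- rectangle identity
  have C : ∀ T : ℝ, (∫ x in (-T)..T, h (x + θ * Complex.I))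
      = (∫ x in (-T)..T, h x)
        + (Complex.I • (∫ y in (0:ℝ)..θ, h (T + y * Complex.I))
          - Complex.I • (∫ y in (0:ℝ)..θ, h (-T + y * Complex.I))) := by
    intro T
    have hrect := Complex.integral_boundary_rect_eq_zero_of_differentiable_on_off_countable h
      ((-T : ℝ) : ℂ) ((T : ℝ) + θ * Complex.I) ∅ countable_empty ?_ ?_
    · have h1 : (((-T:ℝ):ℂ)).re = -T := by simp
      have h2 : (((T:ℝ):ℂ) + θ * Complex.I).re = T := by simp
      have h3 : (((-T:ℝ):ℂ)).im = 0 := by simp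
      have h4 : (((T:ℝ):ℂ) + θ * Complex.I).im = θ := by simp
      rw [h1, h2, h3, h4] at hrect
      have h5 : (∫ x in (-T)..T, h (x + (0:ℝ) * Complex.I)) = ∫ x in (-T)..T, h x := by
        congr 1; ext x; norm_num
      rw [h5] at hrect
      push_cast at hrect ⊢
      linear_combination -hrect
    · intro z hz
      rw [Complex.mem_reProdIm] at hz
      refine ((hdiff z ?_).continuousAt).continuousWithinAt
      have := hz.2
      simp only [Complex.add_im, Complex.ofReal_im, Complex.mul_im, Complex.ofReal_re,
        Complex.I_im, Complex.I_re, mul_one, mul_zero, add_zero, zero_add] at this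
      rwa [uIcc_of_le hθ0] at this
    · intro z hz
      apply hdiff
      have hzmem := hz.1
      rw [Complex.mem_reProdIm] at hzmem
      have := hzmem.2
      simp only [Complex.add_im, Complex.ofReal_im, Complex.mul_im, Complex.ofReal_re,
        Complex.I_im, Complex.I_re, mul_one, mul_zero, add_zero, zero_add] at this
      rw [min_eq_left hθ0, max_eq_right hθ0] at this
      exact ⟨this.1.le, this.2.le⟩
  -- integrability at height 0 and θ
  have hc0 : (0:ℝ) < Real.cos 0 := by norm_num
  have hint0 : Integrable (fun x : ℝ => h ((x:ℂ))) := by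
    refine (integrable_inv_cosh hc0 ξ).congr (Eventually.of_forall fun x => ?_)
    rw [hh]
    norm_num
  have hshift : ∀ x : ℝ, h ((x:ℂ) + θ * Complex.I)
      = Complex.exp ((ξ * θ : ℝ)) * (Complex.exp (-(Complex.I * ξ * x)) / Complex.cosh (x + θ * Complex.I)) := by
    intro x
    simp only [hh]
    have heqn : -(Complex.I * ξ * ((x:ℂ) + θ * Complex.I)) = ((ξ * θ : ℝ) : ℂ) + -(Complex.I * ξ * x) := by
      push_cast
      linear_combination (-(ξ:ℂ) * θ) * Complex.I_sq
    rw [heqn, Complex.exp_add, mul_div_assoc]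
  have hintθ : Integrable (fun x : ℝ => h ((x:ℂ) + θ * Complex.I)) := by
    have hi := (integrable_inv_cosh hcosθ ξ).const_mul (Complex.exp (((ξ * θ : ℝ) : ℂ)))
    exact hi.congr (Eventually.of_forall fun x => (hshift x).symm)
  -- limits of horizontal integrals
  have T1 : Tendsto (fun T => ∫ x in (-T)..T, h ((x:ℂ) + θ * Complex.I)) atTop
      (𝓝 (∫ x : ℝ, h ((x:ℂ) + θ * Complex.I))) :=
    intervalIntegral_tendsto_integral hintθ tendsto_neg_atTop_atBot tendsto_id
  have T2 : Tendsto (fun T => ∫ x in (-T)..T, h ((x:ℂ))) atTop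
      (𝓝 (∫ x : ℝ, h ((x:ℂ)))) :=
    intervalIntegral_tendsto_integral hint0 tendsto_neg_atTop_atBot tendsto_id
  -- vertical integrals tend to zero
  have hnorm : ∀ x y : ℝ, y ∈ Set.uIoc 0 θ →
      ‖h ((x:ℂ) + y * Complex.I)‖ ≤ Real.exp (|ξ| * θ) / (Real.cos θ * Real.cosh x) := by
    intro x y hy
    rw [Set.uIoc_of_le hθ0] at hy
    rw [hh]
    simp only [norm_div]
    have hnum : ‖Complex.exp (-(Complex.I * ξ * ((x:ℂ) + y * Complex.I)))‖ ≤ Real.exp (|ξ| * θ) := by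
      rw [Complex.norm_exp]
      apply Real.exp_le_exp.2
      have hre : (-(Complex.I * ξ * ((x:ℂ) + y * Complex.I))).re = ξ * y := by
        simp
      rw [hre]
      calc ξ * y ≤ |ξ * y| := le_abs_self _
        _ = |ξ| * y := by rw [abs_mul, abs_of_pos hy.1]
        _ ≤ |ξ| * θ := by
            apply mul_le_mul_of_nonneg_left hy.2 (abs_nonneg ξ)
    have hden : Real.cos θ * Real.cosh x ≤ ‖Complex.cosh ((x:ℂ) + y * Complex.I)‖ := by
      refine le_trans ?_ (le_abs_cosh ?_ x)
      · apply mul_le_mul_of_nonneg_right _ (Real.cosh_pos x).le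
        apply Real.cos_le_cos_of_nonneg_of_le_pi hy.1.le (by linarith) hy.2
      · exact le_trans hcosθ.le (by
          apply Real.cos_le_cos_of_nonneg_of_le_pi hy.1.le (by linarith) hy.2)
    apply div_le_div₀ (Real.exp_pos _).le hnum (by positivity) hden
  have hVbound : ∀ T : ℝ,
      ‖(Complex.I • (∫ y in (0:ℝ)..θ, h ((T:ℂ) + y * Complex.I))
          - Complex.I • (∫ y in (0:ℝ)..θ, h ((-T:ℂ) + y * Complex.I)))‖
        ≤ Real.exp (|ξ| * θ) / (Real.cos θ * Real.cosh T) * θ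
          + Real.exp (|ξ| * θ) / (Real.cos θ * Real.cosh T) * θ := by
    intro T
    refine (norm_sub_le _ _).trans (add_le_add ?_ ?_)
    · rw [norm_smul, Complex.norm_I, one_mul]
      refine (intervalIntegral.norm_integral_le_of_norm_le_const fun y hy => hnorm T y hy).trans ?_
      rw [sub_zero, _root_.abs_of_nonneg hθ0]
    · rw [norm_smul, Complex.norm_I, one_mul]
      have hb : ∀ y ∈ Set.uIoc (0:ℝ) θ,
          ‖h ((-T:ℝ) + (y:ℝ) * Complex.I)‖ ≤ Real.exp (|ξ| * θ) / (Real.cos θ * Real.cosh T) := by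
        intro y hy
        have := hnorm (-T) y hy
        rwa [Real.cosh_neg] at this
      refine le_trans (intervalIntegral.norm_integral_le_of_norm_le_const fun y hy => by
        have := hb y hy
        push_cast at this ⊢
        exact this) ?_
      rw [sub_zero, _root_.abs_of_nonneg hθ0]
  have hV : Tendsto (fun T : ℝ =>
      (Complex.I • (∫ y in (0:ℝ)..θ, h ((T:ℂ) + y * Complex.I))
          - Complex.I • (∫ y in (0:ℝ)..θ, h ((-T:ℂ) + y * Complex.I)))) atTop (𝓝 0) := by
    apply squeeze_zero_norm hVbound
    have hcosh : Tendsto (fun T : ℝ => Real.cosh T) atTop atTop := by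
      apply tendsto_atTop_mono (fun x => ?_) (Real.tendsto_exp_atTop.atTop_div_const two_pos)
      rw [Real.cosh_eq]
      have := Real.exp_pos (-x)
      linarith
    have : Tendsto (fun T : ℝ => Real.exp (|ξ| * θ) / (Real.cos θ * Real.cosh T) * θ) atTop (𝓝 0) := by
      rw [show (0:ℝ) = 0 * θ by ring]
      apply Tendsto.mul_const
      apply Tendsto.div_atTop tendsto_const_nhds
      exact Tendsto.const_mul_atTop hcosθ hcosh
    rw [show (0:ℝ) = 0 + 0 by ring]
    exact this.add this
  -- combine
  have heq : (∫ x : ℝ, h ((x:ℂ) + θ * Complex.I)) = (∫ x : ℝ, h ((x:ℂ))) + 0 := by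
    apply tendsto_nhds_unique T1
    have := T2.add hV
    refine this.congr fun T => ?_
    rw [← C T]
  rw [add_zero] at heq
  -- identify both sides
  have hL : (∫ x : ℝ, h ((x:ℂ) + θ * Complex.I))
      = Complex.exp ((ξ * θ : ℝ))
        * ∫ x : ℝ, Complex.exp (-(Complex.I * ξ * x)) / Complex.cosh (x + θ * Complex.I) := by
    rw [← MeasureTheory.integral_const_mul]
    exact integral_congr_ae (Eventually.of_forall fun x => hshift x)
  have hR : (∫ x : ℝ, h ((x:ℂ)))
      = (Real.pi : ℂ) / (Real.cosh (Real.pi * ξ / 2) : ℂ) := by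
    rw [← key0 ξ]
    refine integral_congr_ae (Eventually.of_forall fun x => ?_)
    rw [hh]
    norm_num
  rw [hL, hR] at heq
  have hexp_ne : Complex.exp (((ξ * θ : ℝ) : ℂ)) ≠ 0 := Complex.exp_ne_zero _
  have hF : (∫ x : ℝ, Complex.exp (-(Complex.I * ξ * x)) / Complex.cosh (x + θ * Complex.I))
      = Complex.exp (-((ξ * θ : ℝ) : ℂ)) * ((Real.pi : ℂ) / (Real.cosh (Real.pi * ξ / 2) : ℂ)) := by
    rw [← heq, Complex.exp_neg, inv_mul_cancel_left₀ hexp_ne]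
  rw [hF]
  push_cast
  rw [mul_comm (ξ:ℂ) (θ:ℂ)]
  ring


lemma cosh_tendsto_atTop : Tendsto Real.cosh atTop atTop := by
  apply tendsto_atTop_mono (fun x => ?_) (Real.tendsto_exp_atTop.atTop_div_const two_pos)
  rw [Real.cosh_eq]
  have := Real.exp_pos (-x)
  linarith

lemma cosh_tendsto_atBot : Tendsto Real.cosh atBot atTop := by
  have h1 : Tendsto (fun x : ℝ => Real.exp (-x) / 2) atBot atTop :=
    (Real.tendsto_exp_atTop.comp tendsto_neg_atBot_atTop).atTop_div_const two_pos
  apply tendsto_atTop_mono (fun x => ?_) h1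
  rw [Real.cosh_eq]
  have := Real.exp_pos x
  linarith

lemma hasDeriv_G {θ : ℝ} (hcosθ : 0 < Real.cos θ) (ξ : ℝ) (x : ℝ) :
    HasDerivAt (fun x : ℝ => Complex.exp (-(Complex.I * ξ * x)) / Complex.cosh (x + θ * Complex.I))
      (-(Complex.I * ξ) * (Complex.exp (-(Complex.I * ξ * x)) / Complex.cosh (x + θ * Complex.I))
        - Complex.sinh (x + θ * Complex.I) / Complex.cosh (x + θ * Complex.I) ^ 2
          * Complex.exp (-(Complex.I * ξ * x))) x := by
  have hu : HasDerivAt (fun x : ℝ => Complex.exp (-(Complex.I * ξ * x)))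
      (-(Complex.I * ξ) * Complex.exp (-(Complex.I * ξ * x))) x := by
    have h1 : HasDerivAt (fun z : ℂ => Complex.exp (-(Complex.I * ξ * z)))
        (-(Complex.I * ξ) * Complex.exp (-(Complex.I * ξ * (x:ℂ)))) (x : ℂ) := by
      have h2 : HasDerivAt (fun z : ℂ => -(Complex.I * ξ * z)) (-(Complex.I * ξ)) (x : ℂ) := by
        simpa using ((hasDerivAt_id (x:ℂ)).const_mul (Complex.I * ξ)).fun_neg
      simpa [mul_comm] using h2.cexp
    exact h1.comp_ofReal
  have hv : HasDerivAt (fun x : ℝ => Complex.cosh ((x:ℂ) + θ * Complex.I))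
      (Complex.sinh ((x:ℂ) + θ * Complex.I)) x := by
    have h1 : HasDerivAt (fun z : ℂ => Complex.cosh (z + θ * Complex.I))
        (Complex.sinh ((x:ℂ) + θ * Complex.I)) (x : ℂ) := by
      have h2 : HasDerivAt (fun z : ℂ => z + θ * Complex.I) 1 (x : ℂ) := by
        simpa using (hasDerivAt_id (x:ℂ)).add_const (θ * Complex.I)
      exact ((Complex.hasDerivAt_cosh ((x:ℂ) + θ * Complex.I)).comp (x:ℂ) h2).congr_deriv (mul_one _)
    exact h1.comp_ofReal
  have hd := hu.div hv (cosh_ne_zero hcosθ x)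
  refine hd.congr_deriv (Eq.symm ?_)
  have hc := cosh_ne_zero hcosθ x
  field_simp

lemma tendsto_G_atTop {θ : ℝ} (hcosθ : 0 < Real.cos θ) (ξ : ℝ) :
    Tendsto (fun x : ℝ => Complex.exp (-(Complex.I * ξ * x)) / Complex.cosh (x + θ * Complex.I))
      atTop (𝓝 0) := by
  have hb : ∀ x : ℝ, ‖Complex.exp (-(Complex.I * ξ * (x:ℂ))) / Complex.cosh ((x:ℂ) + θ * Complex.I)‖
      ≤ (Real.cos θ * Real.cosh x)⁻¹ := by
    intro x
    rw [norm_div]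
    have h1 : ‖Complex.exp (-(Complex.I * ξ * (x:ℂ)))‖ = 1 := by
      rw [Complex.norm_exp]; simp
    rw [h1, div_eq_mul_inv, one_mul]
    apply inv_anti₀ (by positivity)
    exact le_abs_cosh hcosθ.le x
  have hg : Tendsto (fun x : ℝ => (Real.cos θ * Real.cosh x)⁻¹) atTop (𝓝 0) :=
    Tendsto.inv_tendsto_atTop (Tendsto.const_mul_atTop hcosθ cosh_tendsto_atTop)
  exact squeeze_zero_norm hb hg

lemma tendsto_G_atBot {θ : ℝ} (hcosθ : 0 < Real.cos θ) (ξ : ℝ) :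
    Tendsto (fun x : ℝ => Complex.exp (-(Complex.I * ξ * x)) / Complex.cosh (x + θ * Complex.I))
      atBot (𝓝 0) := by
  have hb : ∀ x : ℝ, ‖Complex.exp (-(Complex.I * ξ * (x:ℂ))) / Complex.cosh ((x:ℂ) + θ * Complex.I)‖
      ≤ (Real.cos θ * Real.cosh x)⁻¹ := by
    intro x
    rw [norm_div]
    have h1 : ‖Complex.exp (-(Complex.I * ξ * (x:ℂ)))‖ = 1 := by
      rw [Complex.norm_exp]; simp
    rw [h1, div_eq_mul_inv, one_mul]
    apply inv_anti₀ (by positivity)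
    exact le_abs_cosh hcosθ.le x
  have hg : Tendsto (fun x : ℝ => (Real.cos θ * Real.cosh x)⁻¹) atBot (𝓝 0) :=
    Tendsto.inv_tendsto_atTop (Tendsto.const_mul_atTop hcosθ cosh_tendsto_atBot)
  exact squeeze_zero_norm hb hg

lemma ibp {θ : ℝ} (hcosθ : 0 < Real.cos θ) (ξ : ℝ) :
    ∫ x : ℝ, Complex.sinh (x + θ * Complex.I) / Complex.cosh (x + θ * Complex.I) ^ 2
        * Complex.exp (-(Complex.I * ξ * x))
      = -(Complex.I * ξ)
        * ∫ x : ℝ, Complex.exp (-(Complex.I * ξ * x)) / Complex.cosh (x + θ * Complex.I) := by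
  have hintD : Integrable (fun x : ℝ =>
      -(Complex.I * ξ) * (Complex.exp (-(Complex.I * ξ * x)) / Complex.cosh (x + θ * Complex.I))
        - Complex.sinh (x + θ * Complex.I) / Complex.cosh (x + θ * Complex.I) ^ 2
          * Complex.exp (-(Complex.I * ξ * x))) :=
    ((integrable_inv_cosh hcosθ ξ).const_mul _).sub (integrable_sinh_div_sq hcosθ ξ)
  have h0 : (∫ x : ℝ,
      (-(Complex.I * ξ) * (Complex.exp (-(Complex.I * ξ * x)) / Complex.cosh (x + θ * Complex.I))
        - Complex.sinh (x + θ * Complex.I) / Complex.cosh (x + θ * Complex.I) ^ 2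
          * Complex.exp (-(Complex.I * ξ * x)))) = 0 := by
    have hIoi : (∫ x in Ioi (0:ℝ),
        (-(Complex.I * ξ) * (Complex.exp (-(Complex.I * ξ * x)) / Complex.cosh (x + θ * Complex.I))
          - Complex.sinh (x + θ * Complex.I) / Complex.cosh (x + θ * Complex.I) ^ 2
            * Complex.exp (-(Complex.I * ξ * x))))
        = 0 - Complex.exp (-(Complex.I * ξ * ((0:ℝ):ℂ))) / Complex.cosh (((0:ℝ):ℂ) + θ * Complex.I) := by
      apply integral_Ioi_of_hasDerivAt_of_tendsto
        ((hasDeriv_G hcosθ ξ 0).continuousAt.continuousWithinAt)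
        (fun x _ => hasDeriv_G hcosθ ξ x) hintD.integrableOn (tendsto_G_atTop hcosθ ξ)
    have hIic : (∫ x in Iic (0:ℝ),
        (-(Complex.I * ξ) * (Complex.exp (-(Complex.I * ξ * x)) / Complex.cosh (x + θ * Complex.I))
          - Complex.sinh (x + θ * Complex.I) / Complex.cosh (x + θ * Complex.I) ^ 2
            * Complex.exp (-(Complex.I * ξ * x))))
        = Complex.exp (-(Complex.I * ξ * ((0:ℝ):ℂ))) / Complex.cosh (((0:ℝ):ℂ) + θ * Complex.I) - 0 := by
      apply integral_Iic_of_hasDerivAt_of_tendsto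
        ((hasDeriv_G hcosθ ξ 0).continuousAt.continuousWithinAt)
        (fun x _ => hasDeriv_G hcosθ ξ x) hintD.integrableOn (tendsto_G_atBot hcosθ ξ)
    rw [← integral_Iic_add_Ioi hintD.integrableOn hintD.integrableOn, hIoi, hIic]
    ring
  rw [integral_sub ((integrable_inv_cosh hcosθ ξ).const_mul (-(Complex.I * ξ)))
    (integrable_sinh_div_sq hcosθ ξ), MeasureTheory.integral_const_mul, sub_eq_zero] at h0
  exact h0.symm


end

end SolitonFT

open SolitonFT in
/-- **Fourier transform of the soliton profile.** For `θ ∈ (0, π/2)` and `ξ ∈ ℝ`,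
`∫ cosh(x - iθ)/cosh²(x + iθ) e^{-iξx} dx
  = π e^{-θξ}/cosh(πξ/2) (cos 2θ - ξ sin 2θ)`. -/
theorem stmt_7 (θ ξ : ℝ) (hθ : θ ∈ Set.Ioo 0 (Real.pi / 2)) :
    (∫ x : ℝ,
        Complex.cosh ((x : ℂ) - Complex.I * (θ : ℂ))
          / (Complex.cosh ((x : ℂ) + Complex.I * (θ : ℂ))) ^ 2
          * Complex.exp (-(Complex.I * (ξ : ℂ) * (x : ℂ))))
      = ((Real.pi * Real.exp (-(θ * ξ)) / Real.cosh (Real.pi * ξ / 2)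
            * (Real.cos (2 * θ) - ξ * Real.sin (2 * θ)) : ℝ) : ℂ) := by
  obtain ⟨hθ0, hθ2⟩ := hθ
  have hcosθ : 0 < Real.cos θ :=
    Real.cos_pos_of_mem_Ioo ⟨by linarith [Real.pi_pos], hθ2⟩
  have hkey := key hθ0.le hθ2 ξ
  have hibp := ibp hcosθ ξ
  have hrw : ∀ x : ℝ,
      Complex.cosh ((x : ℂ) - Complex.I * (θ : ℂ))
          / (Complex.cosh ((x : ℂ) + Complex.I * (θ : ℂ))) ^ 2
          * Complex.exp (-(Complex.I * (ξ : ℂ) * (x : ℂ)))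
        = (Real.cos (2 * θ) : ℂ)
            * (Complex.exp (-(Complex.I * ξ * x)) / Complex.cosh ((x:ℂ) + θ * Complex.I))
          - (Real.sin (2 * θ) : ℂ) * Complex.I
            * (Complex.sinh ((x:ℂ) + θ * Complex.I) / Complex.cosh ((x:ℂ) + θ * Complex.I) ^ 2
              * Complex.exp (-(Complex.I * ξ * x))) := by
    intro x
    have hc := cosh_ne_zero hcosθ x
    have hid : Complex.cosh ((x : ℂ) - Complex.I * (θ : ℂ))
        = (Real.cos (2 * θ) : ℂ) * Complex.cosh ((x:ℂ) + θ * Complex.I)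
          - (Real.sin (2 * θ) : ℂ) * Complex.I * Complex.sinh ((x:ℂ) + θ * Complex.I) := by
      have h := Complex.cosh_sub ((x:ℂ) + θ * Complex.I) ((2 * θ : ℝ) * Complex.I)
      rw [show ((x:ℂ) + θ * Complex.I - (2 * θ : ℝ) * Complex.I) = (x:ℂ) - Complex.I * θ by
        push_cast; ring] at h
      rw [h, Complex.cosh_mul_I, Complex.sinh_mul_I, Complex.ofReal_cos, Complex.ofReal_sin]
      ring
    rw [show Complex.I * (θ:ℂ) = (θ:ℂ) * Complex.I from mul_comm _ _] at hid ⊢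
    rw [hid]
    field_simp
  rw [integral_congr_ae (Filter.Eventually.of_forall hrw)]
  rw [MeasureTheory.integral_sub ((integrable_inv_cosh hcosθ ξ).const_mul _)
    ((integrable_sinh_div_sq hcosθ ξ).const_mul _),
    MeasureTheory.integral_const_mul, MeasureTheory.integral_const_mul, hkey, hibp, hkey]
  push_cast
  linear_combination ((Complex.sin (2 * (θ:ℂ))) * ξ
      * ((Real.pi : ℂ) * Complex.exp (-((θ:ℂ) * ξ)) / Complex.cosh ((Real.pi : ℂ) * ξ / 2)))
      * Complex.I_sq
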